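/- Let K > 0 with K ≠ 1, and let A₅ be the 3×3 matrix with rows (K, 1, 1), (1, K, 1), (1, 1, 1). Then there exist positive real numbers x and z with x² = (2K + 1 − √(4K + 5)) / (2(K² − 1)) and z² = (K + 2 − √(4K + 5)) / (K − 1) such that, with X = diag(x, x, z), the matrix X·A₅·X equals the matrix with rows (Kx², x², xz), (x², Kx², xz), (xz, xz, z²), and this matrix is doubly stochastic. -/
import Mathlib


open Matrix BigOperators

/-- An `n × n` real matrix is doubly stochastic if all entries are nonnegative and
all row sums and column sums equal `1`. -/
def IsDoublyStochastic {n : ℕ} (S : Matrix (Fin n) (Fin n) ℝ) : Prop :=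
  (∀ i j, 0 ≤ S i j) ∧ (∀ i, ∑ j, S i j = 1) ∧ (∀ j, ∑ i, S i j = 1)

/-- The explicit Sinkhorn limit of the matrix `A₅` with rows `(K,1,1), (1,K,1), (1,1,1)`. -/
theorem sinkhorn_A5 (K : ℝ) (hK : 0 < K) (hK1 : K ≠ 1) :
    ∃ x z : ℝ, 0 < x ∧ 0 < z ∧
      x ^ 2 = (2 * K + 1 - Real.sqrt (4 * K + 5)) / (2 * (K ^ 2 - 1)) ∧
      z ^ 2 = (K + 2 - Real.sqrt (4 * K + 5)) / (K - 1) ∧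
      Matrix.diagonal ![x, x, z] * !![K, 1, 1; 1, K, 1; 1, 1, 1] *
          Matrix.diagonal ![x, x, z]
        = !![K * x ^ 2, x ^ 2, x * z; x ^ 2, K * x ^ 2, x * z; x * z, x * z, z ^ 2] ∧
      IsDoublyStochastic
        !![K * x ^ 2, x ^ 2, x * z; x ^ 2, K * x ^ 2, x * z; x * z, x * z, z ^ 2] := by
  set s := Real.sqrt (4 * K + 5) with hsdef
  have h45 : (0:ℝ) < 4 * K + 5 := by linarith
  have hs2 : s ^ 2 = 4 * K + 5 := Real.sq_sqrt h45.le
  have hs0 : 0 < s := Real.sqrt_pos.mpr h45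
  set a := (2 * K + 1 - s) / (2 * (K ^ 2 - 1)) with hadef
  set b := (K + 2 - s) / (K - 1) with hbdef
  set t := (s - 3) / (2 * (K - 1)) with htdef
  have hKn1 : K - 1 ≠ 0 := sub_ne_zero.mpr hK1
  have hKp1 : K + 1 > 0 := by linarith
  have hKp1' : K + 1 ≠ 0 := ne_of_gt hKp1
  have hK21 : K ^ 2 - 1 ≠ 0 := by
    intro h; rcases lt_or_gt_of_ne hK1 with h' | h' <;> nlinarith
  have key : 0 < a ∧ 0 < b ∧ 0 < t := by
    rcases lt_or_gt_of_ne hK1 with hlt | hgt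
    · have h1 : s < 3 := by
        rw [hsdef]
        rw [show (3:ℝ) = Real.sqrt 9 by
          rw [show (9:ℝ) = 3^2 by norm_num, Real.sqrt_sq]; norm_num]
        exact Real.sqrt_lt_sqrt h45.le (by nlinarith)
      have h2 : 2 * K + 1 < s := by
        rw [hsdef]; rw [show (2*K+1 : ℝ) = Real.sqrt ((2*K+1)^2) by
          rw [Real.sqrt_sq (by linarith)]]
        exact Real.sqrt_lt_sqrt (by positivity) (by nlinarith)
      have h3 : K + 2 < s := by
        rw [hsdef]; rw [show (K+2 : ℝ) = Real.sqrt ((K+2)^2) by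
          rw [Real.sqrt_sq (by linarith)]]
        exact Real.sqrt_lt_sqrt (by positivity) (by nlinarith)
      refine ⟨div_pos_of_neg_of_neg (by linarith) (by nlinarith),
        div_pos_of_neg_of_neg (by linarith) (by linarith),
        div_pos_of_neg_of_neg (by linarith) (by linarith)⟩
    · have h1 : 3 < s := by
        rw [hsdef]; rw [show (3:ℝ) = Real.sqrt 9 by
          rw [show (9:ℝ) = 3^2 by norm_num, Real.sqrt_sq]; norm_num]
        exact Real.sqrt_lt_sqrt (by norm_num) (by nlinarith)
      have h2 : s < 2 * K + 1 := by
        rw [hsdef]; rw [show (2*K+1 : ℝ) = Real.sqrt ((2*K+1)^2) by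
          rw [Real.sqrt_sq (by linarith)]]
        exact Real.sqrt_lt_sqrt h45.le (by nlinarith)
      have h3 : s < K + 2 := by
        rw [hsdef]; rw [show (K+2 : ℝ) = Real.sqrt ((K+2)^2) by
          rw [Real.sqrt_sq (by linarith)]]
        exact Real.sqrt_lt_sqrt h45.le (by nlinarith)
      refine ⟨div_pos (by linarith) (by nlinarith),
        div_pos (by linarith) (by linarith),
        div_pos (by linarith) (by linarith)⟩
  obtain ⟨ha, hb, ht⟩ := key
  clear_value t b a s
  obtain ⟨x, hx0, hx2⟩ : ∃ x : ℝ, 0 < x ∧ x ^ 2 = a :=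
    ⟨Real.sqrt a, Real.sqrt_pos.mpr ha, Real.sq_sqrt ha.le⟩
  obtain ⟨z, hz0, hz2⟩ : ∃ z : ℝ, 0 < z ∧ z ^ 2 = b :=
    ⟨Real.sqrt b, Real.sqrt_pos.mpr hb, Real.sq_sqrt hb.le⟩
  refine ⟨x, z, hx0, hz0, ?_⟩
  have hab : a * b = t ^ 2 := by
    rw [hadef, hbdef, htdef]
    rw [div_mul_div_comm, div_pow, div_eq_div_iff (by positivity)
      (by positivity)]
    linear_combination (4 * (K - 1) ^ 2 - 2 * (K ^ 2 - 1) * (K - 1)) * hs2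
  have hxz : x * z = t := by
    have h1 : (x * z) ^ 2 = t ^ 2 := by rw [mul_pow, hx2, hz2, hab]
    nlinarith [h1, ht, mul_pos hx0 hz0]
  have hrow1 : (K + 1) * a + t = 1 := by
    rw [hadef, htdef]; field_simp; ring
  have hrow3 : 2 * t + b = 1 := by
    rw [hbdef, htdef]; field_simp; ring
  refine ⟨hx2, hz2, ?_, ?_⟩
  · ext i j
    fin_cases i <;> fin_cases j <;>
      simp [Matrix.mul_apply, Fin.sum_univ_three, Matrix.diagonal] <;> ring
  · refine ⟨?_, ?_, ?_⟩
    · intro i j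
      fin_cases i <;> fin_cases j <;> simp <;> positivity
    · intro i
      fin_cases i <;> simp [Fin.sum_univ_three]
      · linear_combination hrow1 + (K + 1) * hx2 + hxz
      · linear_combination hrow1 + (K + 1) * hx2 + hxz
      · linear_combination hrow3 + hz2 + 2 * hxz
    · intro j
      fin_cases j <;> simp [Fin.sum_univ_three]
      · linear_combination hrow1 + (K + 1) * hx2 + hxz
      · linear_combination hrow1 + (K + 1) * hx2 + hxz
      · linear_combination hrow3 + hz2 + 2 * hxz
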